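/- Let q be an odd prime power. The number of pairs (t, (S,R,P)) with t,S,R,P ∈ F_q such that t³ − St² + Rt − P = 0 and (S−P)² + 8P − 4R is a nonzero square in F_q equals (q²−q)(q+1)/2. -/

import Mathlib

open Finset

private lemma aux_two_mul_card_sq (F : Type*) [Field F] [Fintype F] [DecidableEq F]
    (h2 : ringChar F ≠ 2) :
    2 * (univ.filter fun d : F => d ≠ 0 ∧ IsSquare d).card = Fintype.card F - 1 := by
  classical
  have hSN : (univ.filter fun d : F => d ≠ 0 ∧ IsSquare d).card
      = (univ.filter fun d : F => d ≠ 0 ∧ ¬IsSquare d).card := by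
    obtain ⟨b, hb⟩ := FiniteField.exists_nonsquare (F := F) h2
    have hb0 : b ≠ 0 := by rintro rfl; exact hb ⟨0, by ring⟩
    have hbinv : ¬IsSquare b⁻¹ := by
      rintro ⟨u, hu⟩
      exact hb ⟨u⁻¹, by rw [← mul_inv]; rw [← hu]; rw [inv_inv]⟩
    refine card_nbij' (fun x => b * x) (fun y => b⁻¹ * y) ?_ ?_ ?_ ?_
    · rintro x hx
      simp only [mem_coe, mem_filter, mem_univ, true_and] at hx ⊢
      obtain ⟨hx0, u, hu⟩ := hx
      refine ⟨mul_ne_zero hb0 hx0, ?_⟩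
      rintro ⟨v, hv⟩
      refine hb ⟨v * u⁻¹, ?_⟩
      have hu0 : u ≠ 0 := by rintro rfl; exact hx0 (by rw [hu, mul_zero])
      have hv' : b * (u * u) = v * v := by rw [← hu]; exact hv
      field_simp
      linear_combination hv'
    · rintro y hy
      simp only [mem_coe, mem_filter, mem_univ, true_and] at hy ⊢
      obtain ⟨hy0, hy1⟩ := hy
      have hne : b⁻¹ * y ≠ 0 := mul_ne_zero (inv_ne_zero hb0) hy0
      refine ⟨hne, ?_⟩
      have h1 : quadraticChar F (b⁻¹ * y) = 1 := by
        rw [map_mul, quadraticChar_neg_one_iff_not_isSquare.mpr hbinv,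
          quadraticChar_neg_one_iff_not_isSquare.mpr hy1]
        norm_num
      exact (quadraticChar_one_iff_isSquare hne).mp h1
    · intro x _; exact inv_mul_cancel_left₀ hb0 x
    · intro y _; exact mul_inv_cancel_left₀ hb0 y
  have hsplit : (univ.filter fun d : F => d ≠ 0 ∧ IsSquare d).card
      + (univ.filter fun d : F => d ≠ 0 ∧ ¬IsSquare d).card
      = (univ.filter fun d : F => d ≠ 0).card := by
    rw [show (univ.filter fun d : F => d ≠ 0 ∧ IsSquare d)
        = (univ.filter fun d : F => d ≠ 0).filter (fun d => IsSquare d) by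
      rw [filter_filter]]
    rw [show (univ.filter fun d : F => d ≠ 0 ∧ ¬IsSquare d)
        = (univ.filter fun d : F => d ≠ 0).filter (fun d => ¬IsSquare d) by
      rw [filter_filter]]
    exact card_filter_add_card_filter_not _
  have hne0 : (univ.filter fun d : F => d ≠ 0).card = Fintype.card F - 1 := by
    rw [filter_ne', card_erase_of_mem (mem_univ _), card_univ]
  omega

theorem stmt2 (p n q : ℕ) [Fact p.Prime] (hn : 0 < n) (hq : q = p ^ n) (hodd : Odd q)
    (F : Type*) [Field F] [Fintype F] (hF : Fintype.card F = q) :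
    Nat.card {x : F × F × F × F |
      x.1 ^ 3 - x.2.1 * x.1 ^ 2 + x.2.2.1 * x.1 - x.2.2.2 = 0 ∧
      (x.2.1 - x.2.2.2) ^ 2 + 8 * x.2.2.2 - 4 * x.2.2.1 ≠ 0 ∧
      IsSquare ((x.2.1 - x.2.2.2) ^ 2 + 8 * x.2.2.2 - 4 * x.2.2.1)} =
      (q ^ 2 - q) * (q + 1) / 2 := by
  classical
  -- basic facts
  have hchar2 : ringChar F ≠ 2 := by
    intro h
    have h' := FiniteField.even_card_of_char_two h
    rw [hF] at h'
    have := Nat.odd_iff.mp hodd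
    omega
  have h2F : (2 : F) ≠ 0 := Ring.two_ne_zero hchar2
  have h4F : (4 : F) ≠ 0 := by
    rw [show (4:F) = 2*2 by norm_num]; exact mul_ne_zero h2F h2F
  have hq1 : 1 ≤ q := by
    rcases hodd with ⟨m, hm⟩; omega
  -- the number of nonzero squares
  set S : Finset F := univ.filter (fun d : F => d ≠ 0 ∧ IsSquare d) with hS
  set k : ℕ := S.card with hk
  have h2k : 2 * k = q - 1 := by
    rw [hk, hS, aux_two_mul_card_sq F hchar2, hF]
  -- predicates
  set P4 : F × F × F × F → Prop := fun x =>
    x.1 ^ 3 - x.2.1 * x.1 ^ 2 + x.2.2.1 * x.1 - x.2.2.2 = 0 ∧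
    (x.2.1 - x.2.2.2) ^ 2 + 8 * x.2.2.2 - 4 * x.2.2.1 ≠ 0 ∧
    IsSquare ((x.2.1 - x.2.2.2) ^ 2 + 8 * x.2.2.2 - 4 * x.2.2.1) with hP4
  set Q3 : F × F × F → Prop := fun y =>
    (y.2.1 - y.1 - y.2.2 * y.1) ^ 2 - 4 * y.2.2 * (y.1 - 1) ^ 2 ≠ 0 ∧
    IsSquare ((y.2.1 - y.1 - y.2.2 * y.1) ^ 2 - 4 * y.2.2 * (y.1 - 1) ^ 2) with hQ3
  -- Step 1: Nat.card to Finset.card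
  have step1 : Nat.card {x : F × F × F × F | P4 x} = (univ.filter P4).card := by
    rw [Nat.card_coe_set_eq, Set.ncard_eq_toFinset_card', Set.toFinset_setOf]
  -- Step 2: bijection (t,B,C) ↦ (t, B+t, C+B*t, C*t)
  have step2 : (univ.filter Q3).card = (univ.filter P4).card := by
    refine card_bij' (fun y _ => (y.1, y.2.1 + y.1, y.2.2 + y.2.1 * y.1, y.2.2 * y.1))
      (fun x _ => (x.1, x.2.1 - x.1, x.2.2.1 - (x.2.1 - x.1) * x.1)) ?_ ?_ ?_ ?_
    · rintro ⟨t, B, C⟩ hy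
      simp only [hQ3, mem_filter, mem_univ, true_and] at hy
      obtain ⟨h1, h2⟩ := hy
      simp only [hP4, mem_filter, mem_univ, true_and]
      refine ⟨by ring, ?_, ?_⟩
      · rw [show (B + t - C * t) ^ 2 + 8 * (C * t) - 4 * (C + B * t)
          = (B - t - C * t) ^ 2 - 4 * C * (t - 1) ^ 2 by ring]
        exact h1
      · rw [show (B + t - C * t) ^ 2 + 8 * (C * t) - 4 * (C + B * t)
          = (B - t - C * t) ^ 2 - 4 * C * (t - 1) ^ 2 by ring]
        exact h2
    · rintro ⟨t, Sv, R, P⟩ hx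
      simp only [hP4, mem_filter, mem_univ, true_and] at hx
      obtain ⟨h0, h1, h2⟩ := hx
      have hP : P = R * t - Sv * t ^ 2 + t ^ 3 := by linear_combination -h0
      subst hP
      simp only [hQ3, mem_filter, mem_univ, true_and]
      constructor
      · rw [show (Sv - t - t - (R - (Sv - t) * t) * t) ^ 2
            - 4 * (R - (Sv - t) * t) * (t - 1) ^ 2
          = (Sv - (R * t - Sv * t ^ 2 + t ^ 3)) ^ 2
            + 8 * (R * t - Sv * t ^ 2 + t ^ 3) - 4 * R by ring]
        exact h1
      · rw [show (Sv - t - t - (R - (Sv - t) * t) * t) ^ 2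
            - 4 * (R - (Sv - t) * t) * (t - 1) ^ 2
          = (Sv - (R * t - Sv * t ^ 2 + t ^ 3)) ^ 2
            + 8 * (R * t - Sv * t ^ 2 + t ^ 3) - 4 * R by ring]
        exact h2
    · rintro ⟨t, B, C⟩ _
      exact Prod.ext rfl (Prod.ext (by ring) (by ring))
    · rintro ⟨t, Sv, R, P⟩ hx
      simp only [hP4, mem_filter, mem_univ, true_and] at hx
      obtain ⟨h0, -, -⟩ := hx
      exact Prod.ext rfl (Prod.ext (by ring) (Prod.ext (by ring) (by linear_combination h0)))
  -- Step 3: split on t = 1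
  have step3 : (univ.filter Q3).card
      = (univ.filter (fun y : F × F × F => Q3 y ∧ y.1 = 1)).card
      + (univ.filter (fun y : F × F × F => Q3 y ∧ y.1 ≠ 1)).card := by
    rw [show (univ.filter (fun y : F × F × F => Q3 y ∧ y.1 = 1))
        = (univ.filter Q3).filter (fun y => y.1 = 1) by rw [filter_filter]]
    rw [show (univ.filter (fun y : F × F × F => Q3 y ∧ y.1 ≠ 1))
        = (univ.filter Q3).filter (fun y => ¬ y.1 = 1) by rw [filter_filter]]
    exact (card_filter_add_card_filter_not _).symm
  -- Part A: t = 1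
  have partA : (univ.filter (fun y : F × F × F => Q3 y ∧ y.1 = 1)).card = (q - 1) * q := by
    have : (univ.filter (fun y : F × F × F => Q3 y ∧ y.1 = 1)).card
        = ((univ.filter (fun u : F => u ≠ 0)) ×ˢ (univ : Finset F)).card := by
      refine card_bij' (fun y _ => (y.2.1 - 1 - y.2.2, y.2.2))
        (fun z _ => ((1 : F), z.1 + 1 + z.2, z.2)) ?_ ?_ ?_ ?_
      · rintro ⟨t, B, C⟩ hy
        simp only [hQ3, mem_filter, mem_univ, true_and] at hy
        obtain ⟨⟨h1, -⟩, rfl⟩ := hy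
        simp only [mem_product, mem_filter, mem_univ, true_and, and_true]
        intro h
        apply h1
        rw [show (B - 1 - C * 1) ^ 2 - 4 * C * (1 - 1) ^ 2 = (B - 1 - C) ^ 2 by ring,
          show B - 1 - C = 0 from h]
        ring
      · rintro ⟨u, C⟩ hz
        simp only [mem_product, mem_filter, mem_univ, true_and, and_true] at hz
        simp only [hQ3, mem_filter, mem_univ, true_and, and_true]
        rw [show (u + 1 + C - 1 - C * 1) ^ 2 - 4 * C * ((1:F) - 1) ^ 2 = u ^ 2 by ring]
        exact ⟨pow_ne_zero _ hz, IsSquare.sq u⟩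
      · rintro ⟨t, B, C⟩ hy
        simp only [hQ3, mem_filter, mem_univ, true_and] at hy
        obtain ⟨-, rfl⟩ := hy
        exact Prod.ext rfl (Prod.ext (by ring) rfl)
      · rintro ⟨u, C⟩ _
        exact Prod.ext (by ring) rfl
    rw [this, card_product, filter_ne', card_erase_of_mem (mem_univ _), card_univ, hF]
  -- Part B: t ≠ 1
  have partB : (univ.filter (fun y : F × F × F => Q3 y ∧ y.1 ≠ 1)).card
      = (q - 1) * (q * k) := by
    have hbij : (univ.filter (fun y : F × F × F => Q3 y ∧ y.1 ≠ 1)).card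
        = (univ.filter (fun z : F × F × F => z.1 ≠ 1 ∧ z.2.2 ≠ 0 ∧ IsSquare z.2.2)).card := by
      refine card_bij' (fun y _ => (y.1, y.2.1 - y.1 - y.2.2 * y.1,
          (y.2.1 - y.1 - y.2.2 * y.1) ^ 2 - 4 * y.2.2 * (y.1 - 1) ^ 2))
        (fun z _ => (z.1, z.2.1 + z.1 + ((z.2.1 ^ 2 - z.2.2) / (4 * (z.1 - 1) ^ 2)) * z.1,
          (z.2.1 ^ 2 - z.2.2) / (4 * (z.1 - 1) ^ 2))) ?_ ?_ ?_ ?_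
      · rintro ⟨t, B, C⟩ hy
        simp only [hQ3, mem_filter, mem_univ, true_and] at hy
        obtain ⟨⟨h1, h2⟩, ht⟩ := hy
        simp only [mem_filter, mem_univ, true_and]
        exact ⟨ht, h1, h2⟩
      · rintro ⟨t, v, d⟩ hz
        simp only [mem_filter, mem_univ, true_and] at hz
        obtain ⟨ht, hd0, hd⟩ := hz
        have ht1 : t - 1 ≠ 0 := sub_ne_zero.mpr ht
        have hden : 4 * (t - 1) ^ 2 ≠ 0 := mul_ne_zero h4F (pow_ne_zero _ ht1)
        have hDid : (v + t + (v ^ 2 - d) / (4 * (t - 1) ^ 2) * t - t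
              - (v ^ 2 - d) / (4 * (t - 1) ^ 2) * t) ^ 2
            - 4 * ((v ^ 2 - d) / (4 * (t - 1) ^ 2)) * (t - 1) ^ 2 = d := by
          field_simp
          ring
        simp only [hQ3, mem_filter, mem_univ, true_and]
        rw [hDid]
        exact ⟨⟨hd0, hd⟩, ht⟩
      · rintro ⟨t, B, C⟩ hy
        simp only [hQ3, mem_filter, mem_univ, true_and] at hy
        obtain ⟨-, ht⟩ := hy
        have ht1 : t - 1 ≠ 0 := sub_ne_zero.mpr ht
        have hden : 4 * (t - 1) ^ 2 ≠ 0 := mul_ne_zero h4F (pow_ne_zero _ ht1)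
        have hC : ((B - t - C * t) ^ 2 - ((B - t - C * t) ^ 2 - 4 * C * (t - 1) ^ 2))
            / (4 * (t - 1) ^ 2) = C := by
          field_simp
          ring
        refine Prod.ext rfl (Prod.ext ?_ hC)
        show B - t - C * t + t + _ * t = B
        rw [hC]; ring
      · rintro ⟨t, v, d⟩ hz
        simp only [mem_filter, mem_univ, true_and] at hz
        obtain ⟨ht, -, -⟩ := hz
        have ht1 : t - 1 ≠ 0 := sub_ne_zero.mpr ht
        have hden : 4 * (t - 1) ^ 2 ≠ 0 := mul_ne_zero h4F (pow_ne_zero _ ht1)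
        refine Prod.ext rfl (Prod.ext (by ring) ?_)
        show (_ : F) = d
        field_simp
        ring
    have hprod : (univ.filter (fun z : F × F × F => z.1 ≠ 1 ∧ z.2.2 ≠ 0 ∧ IsSquare z.2.2))
        = (univ.filter (fun t : F => t ≠ 1)) ×ˢ ((univ : Finset F) ×ˢ S) := by
      ext ⟨t, v, d⟩
      simp [hS, mem_product]
    rw [hbij, hprod, card_product, card_product, filter_ne',
      card_erase_of_mem (mem_univ _), card_univ, hF, ← hk]
  -- conclude
  show Nat.card {x : F × F × F × F | P4 x} = (q ^ 2 - q) * (q + 1) / 2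
  rw [step1, ← step2, step3, partA, partB]
  have hval : (q ^ 2 - q) * (q + 1) / 2 = q * k * (q + 1) := by
    have h2' : q ^ 2 - q = q * (q - 1) := by rw [sq, Nat.mul_sub, mul_one]
    rw [h2', h2k.symm,
      show q * (2 * k) * (q + 1) = 2 * (q * k * (q + 1)) by ring,
      Nat.mul_div_cancel_left _ (by norm_num)]
  rw [hval]
  have hq2 : q = 2 * k + 1 := by omega
  rw [show q - 1 = 2 * k from h2k.symm, hq2]
  ring
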